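/- Let t > 3 be a prime, ζ a primitive t-th root of unity, λ = (1-ζ)(1-ζ̄), and for each integer a not divisible by t set λ_a = (1-ζ^a)(1-ζ^{-a}). Then for integers a, b ∈ {1, …, t-1} with b ≢ a (mod t) and b ≢ -a (mod t), the element λ·(λ_a⁻¹ - λ_b⁻¹) is a unit of the ring ℤ[ζ+ζ̄]. -/

import Mathlib

open Polynomial Finset

noncomputable def s11ps (o c n : ℕ) : Polynomial ℤ := ∑ j ∈ Finset.range n, Polynomial.X ^ (o + c * j)

private lemma s11_aeval_ps {K : Type*} [CommRing K] (ξ : K) (o c n : ℕ) :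
    aeval ξ (s11ps o c n) = ∑ j ∈ range n, ξ ^ (o + c * j) := by
  simp [s11ps]

private lemma s11_ps_val {K : Type*} [CommRing K] (ξ : K) (o c n : ℕ) :
    (∑ j ∈ range n, ξ ^ (o + c * j)) * (ξ ^ c - 1) = ξ ^ o * (ξ ^ (c * n) - 1) := by
  have : ∀ j, ξ ^ (o + c * j) = ξ ^ o * (ξ ^ c) ^ j := by
    intro j; rw [pow_add, pow_mul]
  simp_rw [this, ← Finset.mul_sum, mul_assoc, geom_sum_mul, pow_mul]

private lemma s11_cosh_mem {K : Type*} [Field K] {ζ : K} (hz : ζ ≠ 0) (i : ℕ) :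
    ζ ^ i + ζ⁻¹ ^ i ∈ Algebra.adjoin ℤ ({ζ + ζ⁻¹} : Set K) := by
  have hinv : ζ * ζ⁻¹ = 1 := mul_inv_cancel₀ hz
  have key : ∀ i : ℕ, ζ ^ i + ζ⁻¹ ^ i ∈ Algebra.adjoin ℤ ({ζ + ζ⁻¹} : Set K) ∧
      ζ ^ (i+1) + ζ⁻¹ ^ (i+1) ∈ Algebra.adjoin ℤ ({ζ + ζ⁻¹} : Set K) := by
    intro i
    induction i with
    | zero =>
      constructor
      · simpa using add_mem (one_mem _) (one_mem _)
      · simpa using Algebra.subset_adjoin (Set.mem_singleton _)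
    | succ n ih =>
      refine ⟨ih.2, ?_⟩
      have heq : ζ ^ (n+2) + ζ⁻¹ ^ (n+2) =
          (ζ + ζ⁻¹) * (ζ ^ (n+1) + ζ⁻¹ ^ (n+1)) - (ζ ^ n + ζ⁻¹ ^ n) := by
        linear_combination -(ζ ^ n + ζ⁻¹ ^ n) * hinv
      rw [heq]
      exact sub_mem (mul_mem (Algebra.subset_adjoin (Set.mem_singleton _)) ih.2) ih.1
  exact (key i).1

private lemma s11_sum_mem {K : Type*} [Field K] {ζ : K} (hz : ζ ≠ 0) (p : Polynomial ℤ) :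
    aeval ζ p + aeval ζ⁻¹ p ∈ Algebra.adjoin ℤ ({ζ + ζ⁻¹} : Set K) := by
  rw [aeval_eq_sum_range, aeval_eq_sum_range, ← Finset.sum_add_distrib]
  refine sum_mem fun i _ => ?_
  rw [← smul_add]
  exact zsmul_mem (s11_cosh_mem hz i) _

private lemma s11_real_mem {K : Type*} [Field K] {ζ : K} {t m : ℕ}
    (hζ : IsPrimitiveRoot ζ t) (hm : t = 2 * m + 1) (hm0 : 0 < m)
    (p : Polynomial ℤ) (hp : aeval ζ p = aeval ζ⁻¹ p) :
    aeval ζ p ∈ Algebra.adjoin ℤ ({ζ + ζ⁻¹} : Set K) := by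
  have ht1 : 1 < t := by omega
  have hz : ζ ≠ 0 := hζ.ne_zero (by omega)
  have hinv : ζ * ζ⁻¹ = 1 := mul_inv_cancel₀ hz
  have hζ1 : ζ ≠ 1 := hζ.ne_one ht1
  have hd1 : ζ - 1 ≠ 0 := sub_ne_zero.mpr hζ1
  have hζ1' : ζ⁻¹ ≠ 1 := by
    intro h; exact hζ1 (by rw [← inv_inv ζ, h, inv_one])
  have hd2 : ζ⁻¹ - 1 ≠ 0 := sub_ne_zero.mpr hζ1'
  set S := Algebra.adjoin ℤ ({ζ + ζ⁻¹} : Set K)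
  set y := aeval ζ p with hy
  -- step: (ζ^i + ζ⁻¹^i) * y ∈ S
  have step : ∀ i : ℕ, (ζ ^ i + ζ⁻¹ ^ i) * y ∈ S := by
    intro i
    have h1 := s11_sum_mem hz (X ^ i * p)
    have e1 : aeval ζ (X ^ i * p) = ζ ^ i * y := by rw [map_mul, aeval_X_pow]
    have e2 : aeval ζ⁻¹ (X ^ i * p) = ζ⁻¹ ^ i * y := by
      rw [map_mul, aeval_X_pow, ← hp]
    rw [e1, e2, ← add_mul] at h1
    exact h1
  -- the sum identity
  have hT : ζ ^ (2 * m + 1) = 1 := by rw [← hm]; exact hζ.pow_eq_one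
  have hzi : ζ⁻¹ = ζ ^ m * ζ ^ m := inv_eq_of_mul_eq_one_right (by linear_combination hT)
  have hw' : ζ⁻¹ ^ (m + 1) = ζ ^ m := by
    rw [inv_pow]
    exact inv_eq_of_mul_eq_one_right (by linear_combination hT)
  have hA := geom_sum_mul ζ (m + 1)
  have hB := geom_sum_mul ζ⁻¹ (m + 1)
  rw [hw'] at hB
  have hAB : (∑ i ∈ range (m + 1), (ζ ^ i + ζ⁻¹ ^ i)) = 1 := by
    rw [Finset.sum_add_distrib]
    have h3 : ((∑ i ∈ range (m+1), ζ ^ i) + ∑ i ∈ range (m+1), ζ⁻¹ ^ i) * ((ζ - 1) * (ζ⁻¹ - 1)) =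
        1 * ((ζ - 1) * (ζ⁻¹ - 1)) := by
      rw [hzi] at hB ⊢
      linear_combination (ζ ^ m * ζ ^ m - 1) * hA + (ζ - 1) * hB + (ζ ^ m - 1) * hT
    exact mul_right_cancel₀ (mul_ne_zero hd1 hd2) h3
  have : y = ∑ i ∈ range (m + 1), (ζ ^ i + ζ⁻¹ ^ i) * y := by
    rw [← Finset.sum_mul, hAB, one_mul]
  rw [this]
  exact sum_mem fun i _ => step i

set_option maxHeartbeats 2000000 in
/-- Let `t > 3` be a prime, `ζ` a primitive `t`-th root of unity,
`λ = (1-ζ)(1-ζ⁻¹)` and `λ_a = (1-ζ^a)(1-ζ^{-a})` for `t ∤ a`.  Then for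
`a, b ∈ {1, …, t-1}` with `b ≢ a (mod t)` and `b ≢ -a (mod t)`, the element
`λ·(λ_a⁻¹ - λ_b⁻¹)` is a unit of `ℤ[ζ+ζ⁻¹]`. -/
theorem stmt_11 (t : ℕ+) (ht : (t : ℕ).Prime) (ht3 : 3 < (t : ℕ))
    (ζ : CyclotomicField t ℚ) (hζ : IsPrimitiveRoot ζ (t : ℕ))
    (a b : ℕ) (ha1 : 1 ≤ a) (hat : a ≤ (t : ℕ) - 1) (hb1 : 1 ≤ b) (hbt : b ≤ (t : ℕ) - 1)
    (hba : ¬ ((b : ℤ) ≡ (a : ℤ) [ZMOD (t : ℕ)]))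
    (hba' : ¬ ((b : ℤ) ≡ -(a : ℤ) [ZMOD (t : ℕ)])) :
    ∃ u : (Algebra.adjoin ℤ ({ζ + ζ⁻¹} : Set (CyclotomicField t ℚ)))ˣ,
      ((u : Algebra.adjoin ℤ ({ζ + ζ⁻¹} : Set (CyclotomicField t ℚ))) :
          CyclotomicField t ℚ) =
        (1 - ζ) * (1 - ζ⁻¹) *
          (((1 - ζ ^ a) * (1 - ζ ^ (-(a : ℤ))))⁻¹ -
            ((1 - ζ ^ b) * (1 - ζ ^ (-(b : ℤ))))⁻¹) := by
  classical
  let T : ℕ := (t : ℕ)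
  have hTdef : T = (t : ℕ) := rfl
  haveI : Fact T.Prime := ⟨ht⟩
  haveI : NeZero T := ⟨by omega⟩
  have haT : a ≤ T := by omega
  have hbT : b ≤ T := by omega
  have hzero : ζ ≠ 0 := hζ.ne_zero (by omega)
  -- `ZMod` bookkeeping
  have hvalcast : ∀ x : ZMod T, ((x.val : ℕ) : ZMod T) = x := fun x => by
    rw [ZMod.natCast_val, ZMod.cast_id]
  have haz : (a : ZMod T) ≠ 0 := by
    rw [Ne, ZMod.natCast_eq_zero_iff]
    intro hdvd; have := Nat.le_of_dvd (by omega) hdvd; omega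
  have hbz : (b : ZMod T) ≠ 0 := by
    rw [Ne, ZMod.natCast_eq_zero_iff]
    intro hdvd; have := Nat.le_of_dvd (by omega) hdvd; omega
  have hba2 : (b : ZMod T) ≠ (a : ZMod T) := by
    intro h; apply hba
    rwa [← ZMod.intCast_eq_intCast_iff, Int.cast_natCast, Int.cast_natCast]
  have hba2' : (b : ZMod T) ≠ -(a : ZMod T) := by
    intro h; apply hba'
    rw [← ZMod.intCast_eq_intCast_iff]; push_cast; exact h
  have hEz : (a : ZMod T) - b ≠ 0 := sub_ne_zero.mpr fun h => hba2 h.symm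
  have hGz : (a : ZMod T) + b ≠ 0 := fun h => hba2' (by linear_combination h)
  have h2z : (2 : ZMod T) ≠ 0 := by
    have h2 : ((2 : ℕ) : ZMod T) ≠ 0 := by
      rw [Ne, ZMod.natCast_eq_zero_iff]
      intro hdvd; have := Nat.le_of_dvd (by norm_num) hdvd; omega
    simpa using h2
  -- exponents
  set a' : ℕ := ((a : ZMod T)⁻¹).val with ha'def
  set b' : ℕ := ((b : ZMod T)⁻¹).val with hb'def
  set g : ℕ := ((a : ZMod T) + b).val with hgdef
  set g' : ℕ := (((a : ZMod T) + b)⁻¹).val with hg'def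
  set e : ℕ := ((a : ZMod T) - b).val with hedef
  set e' : ℕ := (((a : ZMod T) - b)⁻¹).val with he'def
  set hh : ℕ := (((a : ZMod T) + b) * (2 : ZMod T)⁻¹).val with hhhdef
  set kk : ℕ := (((a : ZMod T) - b) * (2 : ZMod T)⁻¹).val with hkkdef
  have hgT : g ≤ T := le_of_lt (ZMod.val_lt _)
  have heT : e ≤ T := le_of_lt (ZMod.val_lt _)
  have hhhT : hh ≤ T := le_of_lt (ZMod.val_lt _)
  have hkkT : kk ≤ T := le_of_lt (ZMod.val_lt _)
  -- power translation
  have hpown : ∀ m n : ℕ, ((m : ZMod T) = (n : ZMod T)) → ζ ^ m = ζ ^ n := by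
    have key : ∀ m n : ℕ, m ≤ n → (m ≡ n [MOD T]) → ζ ^ m = ζ ^ n := by
      intro m n hle hmn
      obtain ⟨q, hq⟩ := (Nat.modEq_iff_dvd' hle).mp hmn
      have hn : n = m + T * q := by omega
      rw [hn, pow_add, pow_mul, hζ.pow_eq_one, one_pow, mul_one]
    intro m n hmn
    rw [ZMod.natCast_eq_natCast_iff] at hmn
    rcases le_total m n with hle | hle
    · exact key m n hle hmn
    · exact (key n m hle hmn.symm).symm
  have hne1 : ∀ n : ℕ, ((n : ZMod T) ≠ 0) → ζ ^ n - 1 ≠ 0 := by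
    intro n hn
    refine sub_ne_zero.mpr fun h1 => hn ?_
    rw [hζ.pow_eq_one_iff_dvd] at h1
    exact (ZMod.natCast_eq_zero_iff n T).mpr h1
  have hcast : ∀ n : ℕ, n ≤ T → ((T - n : ℕ) : ZMod T) = -(n : ZMod T) := by
    intro n hn; rw [Nat.cast_sub hn, ZMod.natCast_self, zero_sub]
  have hTinv : ∀ n : ℕ, n ≤ T → ζ ^ (T - n) * ζ ^ n = 1 := by
    intro n hn; rw [← pow_add, Nat.sub_add_cancel hn, hζ.pow_eq_one]
  -- exponent congruences
  have z1 : ζ ^ (a * a') = ζ ^ 1 := by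
    apply hpown; rw [Nat.cast_mul, Nat.cast_one, ha'def, hvalcast]
    exact mul_inv_cancel₀ haz
  have z2 : ζ ^ ((T - a) * a') = ζ ^ (T - 1) := by
    apply hpown
    rw [Nat.cast_mul, hcast a haT, hcast 1 (by omega), Nat.cast_one, ha'def, hvalcast,
      neg_mul, mul_inv_cancel₀ haz]
  have z3 : ζ ^ (b * b') = ζ ^ 1 := by
    apply hpown; rw [Nat.cast_mul, Nat.cast_one, hb'def, hvalcast]
    exact mul_inv_cancel₀ hbz
  have z4 : ζ ^ ((T - b) * b') = ζ ^ (T - 1) := by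
    apply hpown
    rw [Nat.cast_mul, hcast b hbT, hcast 1 (by omega), Nat.cast_one, hb'def, hvalcast,
      neg_mul, mul_inv_cancel₀ hbz]
  have z5 : ζ ^ (g * g') = ζ ^ 1 := by
    apply hpown; rw [Nat.cast_mul, Nat.cast_one, hgdef, hg'def, hvalcast, hvalcast]
    exact mul_inv_cancel₀ hGz
  have z6 : ζ ^ ((T - e) * e') = ζ ^ (T - 1) := by
    apply hpown
    rw [Nat.cast_mul, hcast e heT, hcast 1 (by omega), Nat.cast_one, hedef, he'def,
      hvalcast, hvalcast, neg_mul, mul_inv_cancel₀ hEz]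
  have h2inv : (2 : ZMod T)⁻¹ * 2 = 1 := by
    rw [mul_comm]; exact mul_inv_cancel₀ h2z
  have z7 : ζ ^ a = ζ ^ (hh + kk) := by
    apply hpown
    rw [Nat.cast_add, hhhdef, hkkdef, hvalcast, hvalcast]
    have : ((a : ZMod T) + b) * 2⁻¹ + ((a : ZMod T) - b) * 2⁻¹
        = (a : ZMod T) * (2⁻¹ * 2) := by ring
    rw [this, h2inv, mul_one]
  have z8 : ζ ^ (b + kk) = ζ ^ hh := by
    apply hpown
    rw [Nat.cast_add, hhhdef, hkkdef, hvalcast, hvalcast]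
    have : (b : ZMod T) + ((a : ZMod T) - b) * 2⁻¹
        = ((a : ZMod T) + b) * 2⁻¹ + (b : ZMod T) * (1 - (2⁻¹ * 2) * 1) := by ring
    rw [this, h2inv]; ring
  have z9 : ζ ^ g = ζ ^ (hh + hh) := by
    apply hpown
    rw [Nat.cast_add, hgdef, hhhdef, hvalcast, hvalcast]
    have : ((a : ZMod T) + b) * 2⁻¹ + ((a : ZMod T) + b) * 2⁻¹
        = ((a : ZMod T) + b) * (2⁻¹ * 2) * 1 - 0 := by ring
    rw [this, h2inv]; ring
  have z10 : ζ ^ e = ζ ^ (kk + kk) := by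
    apply hpown
    rw [Nat.cast_add, hedef, hkkdef, hvalcast, hvalcast]
    have : ((a : ZMod T) - b) * 2⁻¹ + ((a : ZMod T) - b) * 2⁻¹
        = ((a : ZMod T) - b) * (2⁻¹ * 2) * 1 - 0 := by ring
    rw [this, h2inv]; ring
  -- the two half-sum atoms
  obtain ⟨P, hPdef⟩ : ∃ x : CyclotomicField t ℚ, x = ζ ^ hh := ⟨_, rfl⟩
  obtain ⟨Q, hQdef⟩ : ∃ x : CyclotomicField t ℚ, x = ζ ^ kk := ⟨_, rfl⟩
  have hP0 : P ≠ 0 := by rw [hPdef]; exact pow_ne_zero _ hzero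
  have hQ0 : Q ≠ 0 := by rw [hQdef]; exact pow_ne_zero _ hzero
  have fA : ζ ^ a = P * Q := by rw [hPdef, hQdef, z7, pow_add]
  have fB : ζ ^ b = P / Q := by
    rw [hPdef, hQdef, eq_div_iff (pow_ne_zero _ hzero), ← pow_add]; exact z8
  have fg : ζ ^ g = P * P := by rw [hPdef, z9, pow_add]
  have fe : ζ ^ e = Q * Q := by rw [hQdef, z10, pow_add]
  have fc : ζ ^ (T - 1) = ζ⁻¹ := by
    have := hTinv 1 (by omega); rw [pow_one] at this
    exact eq_inv_of_mul_eq_one_left this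
  have fA' : ζ ^ (T - a) = (P * Q)⁻¹ := by
    rw [← fA]; exact eq_inv_of_mul_eq_one_left (hTinv a haT)
  have fB' : ζ ^ (T - b) = (P / Q)⁻¹ := by
    rw [← fB]; exact eq_inv_of_mul_eq_one_left (hTinv b hbT)
  have fg' : ζ ^ (T - g) = (P * P)⁻¹ := by
    rw [← fg]; exact eq_inv_of_mul_eq_one_left (hTinv g hgT)
  have fe' : ζ ^ (T - e) = (Q * Q)⁻¹ := by
    rw [← fe]; exact eq_inv_of_mul_eq_one_left (hTinv e heT)
  have fP' : ζ ^ (T - hh) = P⁻¹ := by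
    rw [hPdef]; exact eq_inv_of_mul_eq_one_left (hTinv hh hhhT)
  have fQ' : ζ ^ (T - kk) = Q⁻¹ := by
    rw [hQdef]; exact eq_inv_of_mul_eq_one_left (hTinv kk hkkT)
  -- nonvanishing of denominators
  have n1 : ζ - 1 ≠ 0 := by
    have := hne1 1 (by simpa using one_ne_zero)
    rwa [pow_one] at this
  have n1' : ζ⁻¹ - 1 ≠ 0 := by
    have := hne1 (T - 1) (by rw [hcast 1 (by omega)]; simpa using one_ne_zero)
    rwa [fc] at this
  have nA : P * Q - 1 ≠ 0 := by have := hne1 a haz; rwa [fA] at this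
  have nA' : (P * Q)⁻¹ - 1 ≠ 0 := by
    have := hne1 (T - a) (by rw [hcast a haT]; exact neg_ne_zero.mpr haz)
    rwa [fA'] at this
  have nB : P / Q - 1 ≠ 0 := by have := hne1 b hbz; rwa [fB] at this
  have nB' : (P / Q)⁻¹ - 1 ≠ 0 := by
    have := hne1 (T - b) (by rw [hcast b hbT]; exact neg_ne_zero.mpr hbz)
    rwa [fB'] at this
  have ngz : (g : ZMod T) ≠ 0 := by rw [hgdef, hvalcast]; exact hGz
  have nez : (e : ZMod T) ≠ 0 := by rw [hedef, hvalcast]; exact hEz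
  have nG : P * P - 1 ≠ 0 := by have := hne1 g ngz; rwa [fg] at this
  have nG' : (P * P)⁻¹ - 1 ≠ 0 := by
    have := hne1 (T - g) (by rw [hcast g hgT]; exact neg_ne_zero.mpr ngz)
    rwa [fg'] at this
  have nE : Q * Q - 1 ≠ 0 := by have := hne1 e nez; rwa [fe] at this
  have nE' : (Q * Q)⁻¹ - 1 ≠ 0 := by
    have := hne1 (T - e) (by rw [hcast e heT]; exact neg_ne_zero.mpr nez)
    rwa [fe'] at this
  -- the twelve geometric sums
  obtain ⟨Sa1, hSa1⟩ : ∃ x : CyclotomicField t ℚ, x = ∑ j ∈ range a', ζ ^ (0 + a * j) := ⟨_, rfl⟩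
  obtain ⟨Sa2, hSa2⟩ : ∃ x : CyclotomicField t ℚ, x = ∑ j ∈ range a', ζ ^ (0 + (T - a) * j) := ⟨_, rfl⟩
  obtain ⟨Sb1, hSb1⟩ : ∃ x : CyclotomicField t ℚ, x = ∑ j ∈ range b', ζ ^ (0 + b * j) := ⟨_, rfl⟩
  obtain ⟨Sb2, hSb2⟩ : ∃ x : CyclotomicField t ℚ, x = ∑ j ∈ range b', ζ ^ (0 + (T - b) * j) := ⟨_, rfl⟩
  obtain ⟨Ta1, hTa1⟩ : ∃ x : CyclotomicField t ℚ, x = ∑ j ∈ range a, ζ ^ (0 + 1 * j) := ⟨_, rfl⟩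
  obtain ⟨Ta2, hTa2⟩ : ∃ x : CyclotomicField t ℚ, x = ∑ j ∈ range a, ζ ^ (0 + (T - 1) * j) := ⟨_, rfl⟩
  obtain ⟨Tb1, hTb1⟩ : ∃ x : CyclotomicField t ℚ, x = ∑ j ∈ range b, ζ ^ (0 + 1 * j) := ⟨_, rfl⟩
  obtain ⟨Tb2, hTb2⟩ : ∃ x : CyclotomicField t ℚ, x = ∑ j ∈ range b, ζ ^ (0 + (T - 1) * j) := ⟨_, rfl⟩
  obtain ⟨U1, hU1⟩ : ∃ x : CyclotomicField t ℚ, x = ∑ j ∈ range g', ζ ^ (hh + g * j) := ⟨_, rfl⟩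
  obtain ⟨U2, hU2⟩ : ∃ x : CyclotomicField t ℚ, x = ∑ j ∈ range e', ζ ^ ((T - kk) + (T - e) * j) := ⟨_, rfl⟩
  obtain ⟨U1c, hU1c⟩ : ∃ x : CyclotomicField t ℚ, x = ∑ j ∈ range g', ζ ^ ((T - hh) + (T - g) * j) := ⟨_, rfl⟩
  obtain ⟨U2c, hU2c⟩ : ∃ x : CyclotomicField t ℚ, x = ∑ j ∈ range e', ζ ^ (kk + e * j) := ⟨_, rfl⟩
  -- their values
  have eSa1 : Sa1 = (ζ - 1) / (P * Q - 1) := by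
    rw [hSa1, eq_div_iff nA, ← fA]
    have := s11_ps_val ζ 0 a a'
    rwa [pow_zero, one_mul, z1, pow_one] at this
  have eSa2 : Sa2 = (ζ⁻¹ - 1) / ((P * Q)⁻¹ - 1) := by
    rw [hSa2, eq_div_iff nA', ← fA']
    have := s11_ps_val ζ 0 (T - a) a'
    rwa [pow_zero, one_mul, z2, fc] at this
  have eSb1 : Sb1 = (ζ - 1) / (P / Q - 1) := by
    rw [hSb1, eq_div_iff nB, ← fB]
    have := s11_ps_val ζ 0 b b'
    rwa [pow_zero, one_mul, z3, pow_one] at this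
  have eSb2 : Sb2 = (ζ⁻¹ - 1) / ((P / Q)⁻¹ - 1) := by
    rw [hSb2, eq_div_iff nB', ← fB']
    have := s11_ps_val ζ 0 (T - b) b'
    rwa [pow_zero, one_mul, z4, fc] at this
  have eTa1 : Ta1 = (P * Q - 1) / (ζ - 1) := by
    rw [hTa1, eq_div_iff n1, ← fA]
    have := s11_ps_val ζ 0 1 a
    rwa [pow_zero, one_mul, pow_one, one_mul] at this
  have eTa2 : Ta2 = ((P * Q)⁻¹ - 1) / (ζ⁻¹ - 1) := by
    rw [hTa2, eq_div_iff n1', ← fA', ← fc]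
    have := s11_ps_val ζ 0 (T - 1) a
    have hz' : ζ ^ ((T - 1) * a) = ζ ^ (T - a) := by
      apply hpown
      rw [Nat.cast_mul, hcast 1 (by omega), hcast a haT, Nat.cast_one]; ring
    rwa [pow_zero, one_mul, hz'] at this
  have eTb1 : Tb1 = (P / Q - 1) / (ζ - 1) := by
    rw [hTb1, eq_div_iff n1, ← fB]
    have := s11_ps_val ζ 0 1 b
    rwa [pow_zero, one_mul, pow_one, one_mul] at this
  have eTb2 : Tb2 = ((P / Q)⁻¹ - 1) / (ζ⁻¹ - 1) := by
    rw [hTb2, eq_div_iff n1', ← fB', ← fc]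
    have := s11_ps_val ζ 0 (T - 1) b
    have hz' : ζ ^ ((T - 1) * b) = ζ ^ (T - b) := by
      apply hpown
      rw [Nat.cast_mul, hcast 1 (by omega), hcast b hbT, Nat.cast_one]; ring
    rwa [pow_zero, one_mul, hz'] at this
  have eU1 : U1 = P * (ζ - 1) / (P * P - 1) := by
    rw [hU1, eq_div_iff nG, ← fg]
    have := s11_ps_val ζ hh g g'
    rwa [z5, pow_one, ← hPdef] at this
  have eU2 : U2 = Q⁻¹ * (ζ⁻¹ - 1) / ((Q * Q)⁻¹ - 1) := by
    rw [hU2, eq_div_iff nE', ← fe']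
    have := s11_ps_val ζ (T - kk) (T - e) e'
    rwa [z6, fc, fQ'] at this
  have eU1c : U1c = P⁻¹ * (ζ⁻¹ - 1) / ((P * P)⁻¹ - 1) := by
    rw [hU1c, eq_div_iff nG', ← fg']
    have := s11_ps_val ζ (T - hh) (T - g) g'
    have hz' : ζ ^ ((T - g) * g') = ζ ^ (T - 1) := by
      apply hpown
      rw [Nat.cast_mul, hcast g hgT, hcast 1 (by omega), Nat.cast_one, hg'def, hgdef,
        hvalcast, hvalcast, neg_mul, mul_inv_cancel₀ hGz]
    rwa [hz', fc, fP'] at this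
  have eU2c : U2c = Q * (ζ - 1) / (Q * Q - 1) := by
    rw [hU2c, eq_div_iff nE, ← fe]
    have := s11_ps_val ζ kk e e'
    have hz' : ζ ^ (e * e') = ζ ^ 1 := by
      apply hpown; rw [Nat.cast_mul, Nat.cast_one, hedef, he'def, hvalcast, hvalcast]
      exact mul_inv_cancel₀ hEz
    rwa [hz', pow_one, ← hQdef] at this
  have nPmQ : P - Q ≠ 0 := by
    have hb2 : P - Q = (ζ ^ b - 1) * Q := by rw [fB]; field_simp
    rw [hb2]; exact mul_ne_zero (hne1 b hbz) hQ0
  have nQmP : Q - P ≠ 0 := fun h => nPmQ (by linear_combination -h)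
  have hflip : ∀ u : CyclotomicField t ℚ, u - 1 ≠ 0 → 1 - u ≠ 0 := by
    intro u hu h; exact hu (by linear_combination -h)
  have m1 := hflip _ n1
  have m1' := hflip _ n1'
  have mA := hflip _ nA
  have mA' := hflip _ nA'
  have mB := hflip _ nB
  have mB' := hflip _ nB'
  have mG := hflip _ nG
  have mG' := hflip _ nG'
  have mE := hflip _ nE
  have mE' := hflip _ nE'
  -- conjugate evaluation of the sum polynomials
  have hconj : ∀ o c o' c' : ℕ, ((o : ZMod T) + (o' : ZMod T) = 0) →
      ((c : ZMod T) + (c' : ZMod T) = 0) → ∀ n,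
      aeval ζ⁻¹ (s11ps o c n) = ∑ j ∈ range n, ζ ^ (o' + c' * j) := by
    intro o c o' c' ho hc n
    erw [s11_aeval_ps]
    refine Finset.sum_congr rfl fun j _ => ?_
    have h1 : ζ ^ (o' + c' * j) * ζ ^ (o + c * j) = 1 := by
      rw [← pow_add]
      have h2 := hpown ((o' + c' * j) + (o + c * j)) 0 (by
        push_cast
        linear_combination (j : ZMod T) * hc + ho)
      simpa using h2
    rw [inv_pow]
    exact inv_eq_of_mul_eq_one_left h1
  -- the two polynomials
  set px : Polynomial ℤ :=
    s11ps 0 a a' * s11ps 0 (T - a) a' - s11ps 0 b b' * s11ps 0 (T - b) b' with hpxdef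
  set pz : Polynomial ℤ :=
    -(s11ps 0 1 a * s11ps 0 (T - 1) a * s11ps 0 1 b * s11ps 0 (T - 1) b *
      s11ps hh g g' * s11ps (T - kk) (T - e) e') with hpzdef
  have hpx1 : aeval ζ px = Sa1 * Sa2 - Sb1 * Sb2 := by
    erw [hpxdef, map_sub, map_mul, map_mul, s11_aeval_ps, s11_aeval_ps, s11_aeval_ps,
      s11_aeval_ps, ← hSa1, ← hSa2, ← hSb1, ← hSb2]
  have hza0 : (a : ZMod T) + ((T - a : ℕ) : ZMod T) = 0 := by rw [hcast a haT]; ring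
  have hzb0 : (b : ZMod T) + ((T - b : ℕ) : ZMod T) = 0 := by rw [hcast b hbT]; ring
  have hz10 : ((1 : ℕ) : ZMod T) + ((T - 1 : ℕ) : ZMod T) = 0 := by
    rw [hcast 1 (by omega)]; ring
  have hz10' : ((T - 1 : ℕ) : ZMod T) + ((1 : ℕ) : ZMod T) = 0 := by
    rw [hcast 1 (by omega)]; ring
  have hzh0 : (hh : ZMod T) + ((T - hh : ℕ) : ZMod T) = 0 := by rw [hcast hh hhhT]; ring
  have hzg0 : (g : ZMod T) + ((T - g : ℕ) : ZMod T) = 0 := by rw [hcast g hgT]; ring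
  have hzk0 : ((T - kk : ℕ) : ZMod T) + (kk : ZMod T) = 0 := by rw [hcast kk hkkT]; ring
  have hze0 : ((T - e : ℕ) : ZMod T) + (e : ZMod T) = 0 := by rw [hcast e heT]; ring
  have hz00 : ((0 : ℕ) : ZMod T) + ((0 : ℕ) : ZMod T) = 0 := by simp
  have hpx2 : aeval ζ⁻¹ px = Sa2 * Sa1 - Sb2 * Sb1 := by
    rw [hpxdef, map_sub, map_mul, map_mul,
      hconj 0 a 0 (T - a) hz00 hza0 a', hconj 0 (T - a) 0 a hz00 (by rw [add_comm]; exact hza0) a',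
      hconj 0 b 0 (T - b) hz00 hzb0 b', hconj 0 (T - b) 0 b hz00 (by rw [add_comm]; exact hzb0) b',
      ← hSa1, ← hSa2, ← hSb1, ← hSb2]
  have hpz1 : aeval ζ pz = -(Ta1 * Ta2 * Tb1 * Tb2 * U1 * U2) := by
    erw [hpzdef, map_neg, map_mul, map_mul, map_mul, map_mul, map_mul,
      s11_aeval_ps, s11_aeval_ps, s11_aeval_ps, s11_aeval_ps, s11_aeval_ps, s11_aeval_ps,
      ← hTa1, ← hTa2, ← hTb1, ← hTb2, ← hU1, ← hU2]
  have hPP : P * P⁻¹ = 1 := mul_inv_cancel₀ hP0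
  have hQQ : Q * Q⁻¹ = 1 := mul_inv_cancel₀ hQ0
  have gA : (P * Q)⁻¹ = P⁻¹ * Q⁻¹ := mul_inv P Q
  have gB : P / Q = P * Q⁻¹ := div_eq_mul_inv P Q
  have gB' : (P / Q)⁻¹ = P⁻¹ * Q := by
    rw [inv_div, div_eq_mul_inv]; ring
  have gG : (P * P)⁻¹ = P⁻¹ * P⁻¹ := mul_inv P P
  have gE : (Q * Q)⁻¹ = Q⁻¹ * Q⁻¹ := mul_inv Q Q
  have nA2 : P⁻¹ * Q⁻¹ - 1 ≠ 0 := by rw [← gA]; exact nA'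
  have nB2 : P * Q⁻¹ - 1 ≠ 0 := by rw [← gB]; exact nB
  have nB2' : P⁻¹ * Q - 1 ≠ 0 := by rw [← gB']; exact nB'
  have nG2 : P⁻¹ * P⁻¹ - 1 ≠ 0 := by rw [← gG]; exact nG'
  have nE2 : Q⁻¹ * Q⁻¹ - 1 ≠ 0 := by rw [← gE]; exact nE'
  have vSa1 : Sa1 * (P * Q - 1) = ζ - 1 := by rw [eSa1, div_mul_cancel₀ _ nA]
  have vSa2 : Sa2 * (P⁻¹ * Q⁻¹ - 1) = ζ⁻¹ - 1 := by
    rw [eSa2, ← gA, div_mul_cancel₀ _ nA']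
  have vSb1 : Sb1 * (P * Q⁻¹ - 1) = ζ - 1 := by rw [eSb1, ← gB, div_mul_cancel₀ _ nB]
  have vSb2 : Sb2 * (P⁻¹ * Q - 1) = ζ⁻¹ - 1 := by
    rw [eSb2, ← gB', div_mul_cancel₀ _ nB']
  have vTa1 : Ta1 * (ζ - 1) = P * Q - 1 := by rw [eTa1, div_mul_cancel₀ _ n1]
  have vTa2 : Ta2 * (ζ⁻¹ - 1) = P⁻¹ * Q⁻¹ - 1 := by
    rw [eTa2, div_mul_cancel₀ _ n1', gA]
  have vTb1 : Tb1 * (ζ - 1) = P * Q⁻¹ - 1 := by rw [eTb1, div_mul_cancel₀ _ n1, gB]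
  have vTb2 : Tb2 * (ζ⁻¹ - 1) = P⁻¹ * Q - 1 := by
    rw [eTb2, div_mul_cancel₀ _ n1', gB']
  have vU1 : U1 * (P * P - 1) = P * (ζ - 1) := by rw [eU1, div_mul_cancel₀ _ nG]
  have vU2 : U2 * (Q⁻¹ * Q⁻¹ - 1) = Q⁻¹ * (ζ⁻¹ - 1) := by
    rw [eU2, ← gE, div_mul_cancel₀ _ nE']
  have vU1c : U1c * (P⁻¹ * P⁻¹ - 1) = P⁻¹ * (ζ⁻¹ - 1) := by
    rw [eU1c, ← gG, div_mul_cancel₀ _ nG']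
  have vU2c : U2c * (Q * Q - 1) = Q * (ζ - 1) := by rw [eU2c, div_mul_cancel₀ _ nE]
  have hUeq : U1c * U2c = U1 * U2 := by
    have h : U1c * U2c * ((P⁻¹ * P⁻¹ - 1) * (Q * Q - 1)) =
        U1 * U2 * ((P⁻¹ * P⁻¹ - 1) * (Q * Q - 1)) := by
      linear_combination (U2c * (Q * Q - 1)) * vU1c + (P⁻¹ * (ζ⁻¹ - 1)) * vU2c -
        (U1 * U2 * (Q * Q - 1) * (P⁻¹ * P + 1)) * hPP +
        (U2 * (Q * Q - 1) * P⁻¹ * P⁻¹) * vU1 +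
        (P⁻¹ * P⁻¹ * P * (ζ - 1) * U2 * (Q * Q⁻¹ + 1)) * hQQ -
        (P⁻¹ * P⁻¹ * P * Q * Q * (ζ - 1)) * vU2 -
        (P⁻¹ * Q * (ζ - 1) * (ζ⁻¹ - 1)) * hPP -
        (P⁻¹ * Q * (ζ - 1) * (ζ⁻¹ - 1) * P * P⁻¹) * hQQ
    exact mul_right_cancel₀ (mul_ne_zero nG2 nE) h
  have hpz2 : aeval ζ⁻¹ pz = -(Ta1 * Ta2 * Tb1 * Tb2 * U1 * U2) := by
    rw [hpzdef, map_neg, map_mul, map_mul, map_mul, map_mul, map_mul,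
      hconj 0 1 0 (T - 1) hz00 hz10 a, hconj 0 (T - 1) 0 1 hz00 hz10' a,
      hconj 0 1 0 (T - 1) hz00 hz10 b, hconj 0 (T - 1) 0 1 hz00 hz10' b,
      hconj hh g (T - hh) (T - g) hzh0 hzg0 g',
      hconj (T - kk) (T - e) kk e hzk0 hze0 e',
      ← hTa1, ← hTa2, ← hTb1, ← hTb2, ← hU1c, ← hU2c]
    rw [show Ta2 * Ta1 * Tb2 * Tb1 * U1c * U2c = Ta1 * Ta2 * Tb1 * Tb2 * (U1c * U2c) by ring,
      hUeq]
    ring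
  -- membership
  have hodd := ht.odd_of_ne_two (by omega)
  rw [Nat.odd_iff] at hodd
  have hm : T = 2 * (T / 2) + 1 := by omega
  have hm0 : 0 < T / 2 := by omega
  have hxmem : Sa1 * Sa2 - Sb1 * Sb2 ∈ Algebra.adjoin ℤ ({ζ + ζ⁻¹} : Set (CyclotomicField t ℚ)) := by
    have h := s11_real_mem hζ hm hm0 px (by erw [hpx1, hpx2]; ring)
    erw [hpx1] at h; exact h
  have hzmem : -(Ta1 * Ta2 * Tb1 * Tb2 * U1 * U2) ∈
      Algebra.adjoin ℤ ({ζ + ζ⁻¹} : Set (CyclotomicField t ℚ)) := by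
    have h := s11_real_mem hζ hm hm0 pz (by erw [hpz1, hpz2])
    erw [hpz1] at h; exact h
  -- the product is 1
  have hinv1 : Sa1 * Ta1 = 1 := by
    have h : Sa1 * Ta1 * ((P * Q - 1) * (ζ - 1)) = 1 * ((P * Q - 1) * (ζ - 1)) := by
      linear_combination (Ta1 * (ζ - 1)) * vSa1 + (ζ - 1) * vTa1
    exact mul_right_cancel₀ (mul_ne_zero nA n1) h
  have hinv2 : Sa2 * Ta2 = 1 := by
    have h : Sa2 * Ta2 * ((P⁻¹ * Q⁻¹ - 1) * (ζ⁻¹ - 1)) = 1 * ((P⁻¹ * Q⁻¹ - 1) * (ζ⁻¹ - 1)) := by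
      linear_combination (Ta2 * (ζ⁻¹ - 1)) * vSa2 + (ζ⁻¹ - 1) * vTa2
    exact mul_right_cancel₀ (mul_ne_zero nA2 n1') h
  have hinv3 : Sb1 * Tb1 = 1 := by
    have h : Sb1 * Tb1 * ((P * Q⁻¹ - 1) * (ζ - 1)) = 1 * ((P * Q⁻¹ - 1) * (ζ - 1)) := by
      linear_combination (Tb1 * (ζ - 1)) * vSb1 + (ζ - 1) * vTb1
    exact mul_right_cancel₀ (mul_ne_zero nB2 n1) h
  have hinv4 : Sb2 * Tb2 = 1 := by
    have h : Sb2 * Tb2 * ((P⁻¹ * Q - 1) * (ζ⁻¹ - 1)) = 1 * ((P⁻¹ * Q - 1) * (ζ⁻¹ - 1)) := by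
      linear_combination (Tb2 * (ζ⁻¹ - 1)) * vSb2 + (ζ⁻¹ - 1) * vTb2
    exact mul_right_cancel₀ (mul_ne_zero nB2' n1') h
  have hTT : (Ta1 * Ta2 - Tb1 * Tb2) * (U1 * U2) = 1 := by
    have h : ((Ta1 * Ta2 - Tb1 * Tb2) * (U1 * U2)) *
        ((ζ - 1) * (ζ⁻¹ - 1) * (P * P - 1) * (Q⁻¹ * Q⁻¹ - 1)) =
        1 * ((ζ - 1) * (ζ⁻¹ - 1) * (P * P - 1) * (Q⁻¹ * Q⁻¹ - 1)) := by
      linear_combination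
        (Ta2 * U1 * U2 * (ζ⁻¹ - 1) * (P * P - 1) * (Q⁻¹ * Q⁻¹ - 1)) * vTa1 +
        (U1 * U2 * (P * P - 1) * (Q⁻¹ * Q⁻¹ - 1) * (P * Q - 1)) * vTa2 -
        (Tb2 * U1 * U2 * (ζ⁻¹ - 1) * (P * P - 1) * (Q⁻¹ * Q⁻¹ - 1)) * vTb1 -
        (U1 * U2 * (P * P - 1) * (Q⁻¹ * Q⁻¹ - 1) * (P * Q⁻¹ - 1)) * vTb2 +
        (U2 * (Q⁻¹ * Q⁻¹ - 1) * (-(P * Q) - P⁻¹ * Q⁻¹ + P * Q⁻¹ + P⁻¹ * Q)) * vU1 +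
        (P * (ζ - 1) * (-(P * Q) - P⁻¹ * Q⁻¹ + P * Q⁻¹ + P⁻¹ * Q)) * vU2 +
        ((ζ - 1) * (ζ⁻¹ - 1) * (Q * Q⁻¹ - Q⁻¹ * Q⁻¹)) * hPP +
        ((ζ - 1) * (ζ⁻¹ - 1) * (1 - P * P)) * hQQ
    exact mul_right_cancel₀
      (mul_ne_zero (mul_ne_zero (mul_ne_zero n1 n1') nG) nE2) h
  have G1 : (Sa1 * Sa2 - Sb1 * Sb2) * -(Ta1 * Ta2 * Tb1 * Tb2 * U1 * U2) = 1 := by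
    linear_combination (-(Tb1 * Tb2 * U1 * U2) * Sa2 * Ta2) * hinv1 +
      (-(Tb1 * Tb2 * U1 * U2)) * hinv2 +
      (Ta1 * Ta2 * U1 * U2 * Sb2 * Tb2) * hinv3 +
      (Ta1 * Ta2 * U1 * U2) * hinv4 + hTT
  -- the value is the required one
  have hza : ζ ^ (-(a : ℤ)) = (P * Q)⁻¹ := by rw [zpow_neg, zpow_natCast, fA]
  have hzb : ζ ^ (-(b : ℤ)) = (P / Q)⁻¹ := by rw [zpow_neg, zpow_natCast, fB]
  have hA1 : 1 - P * Q ≠ 0 := fun h => nA (by linear_combination -h)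
  have hA2 : 1 - P⁻¹ * Q⁻¹ ≠ 0 := fun h => nA2 (by linear_combination -h)
  have hB1 : 1 - P * Q⁻¹ ≠ 0 := fun h => nB2 (by linear_combination -h)
  have hB2 : 1 - P⁻¹ * Q ≠ 0 := fun h => nB2' (by linear_combination -h)
  have hWA : ((1 - P * Q) * (1 - P⁻¹ * Q⁻¹)) * ((1 - P * Q) * (1 - P⁻¹ * Q⁻¹))⁻¹ = 1 :=
    mul_inv_cancel₀ (mul_ne_zero hA1 hA2)
  have hWB : ((1 - P * Q⁻¹) * (1 - P⁻¹ * Q)) * ((1 - P * Q⁻¹) * (1 - P⁻¹ * Q))⁻¹ = 1 :=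
    mul_inv_cancel₀ (mul_ne_zero hB1 hB2)
  have GxA : Sa1 * Sa2 = (1 - ζ) * (1 - ζ⁻¹) * ((1 - P * Q) * (1 - P⁻¹ * Q⁻¹))⁻¹ := by
    have h : Sa1 * Sa2 * ((1 - P * Q) * (1 - P⁻¹ * Q⁻¹)) =
        (1 - ζ) * (1 - ζ⁻¹) * ((1 - P * Q) * (1 - P⁻¹ * Q⁻¹))⁻¹ *
          ((1 - P * Q) * (1 - P⁻¹ * Q⁻¹)) := by
      linear_combination (-Sa2 * (1 - P⁻¹ * Q⁻¹)) * vSa1 + (ζ - 1) * vSa2 -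
        (1 - ζ) * (1 - ζ⁻¹) * hWA
    exact mul_right_cancel₀ (mul_ne_zero hA1 hA2) h
  have GxB : Sb1 * Sb2 = (1 - ζ) * (1 - ζ⁻¹) * ((1 - P * Q⁻¹) * (1 - P⁻¹ * Q))⁻¹ := by
    have h : Sb1 * Sb2 * ((1 - P * Q⁻¹) * (1 - P⁻¹ * Q)) =
        (1 - ζ) * (1 - ζ⁻¹) * ((1 - P * Q⁻¹) * (1 - P⁻¹ * Q))⁻¹ *
          ((1 - P * Q⁻¹) * (1 - P⁻¹ * Q)) := by
      linear_combination (-Sb2 * (1 - P⁻¹ * Q)) * vSb1 + (ζ - 1) * vSb2 -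
        (1 - ζ) * (1 - ζ⁻¹) * hWB
    exact mul_right_cancel₀ (mul_ne_zero hB1 hB2) h
  have hza2 : ζ ^ (-(a : ℤ)) = P⁻¹ * Q⁻¹ := by rw [hza, gA]
  have hzb2 : ζ ^ (-(b : ℤ)) = P⁻¹ * Q := by rw [hzb, gB']
  have fB2 : ζ ^ b = P * Q⁻¹ := by rw [fB, gB]
  have Gx : Sa1 * Sa2 - Sb1 * Sb2 =
      (1 - ζ) * (1 - ζ⁻¹) *
        (((1 - ζ ^ a) * (1 - ζ ^ (-(a : ℤ))))⁻¹ -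
          ((1 - ζ ^ b) * (1 - ζ ^ (-(b : ℤ))))⁻¹) := by
    rw [hza2, hzb2, fA, fB2]
    linear_combination GxA - GxB
  exact ⟨⟨⟨_, hxmem⟩, ⟨_, hzmem⟩, Subtype.ext (by simpa using G1),
    Subtype.ext (by simpa [mul_comm] using G1)⟩, Gx⟩
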